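/- Let ρ₀ ∈ (0, π/2] and let γ be a closed curve on S² with radius of curvature in (0, ρ₀) which is equatorial, i.e. the image of its caustic band C_γ is contained in some closed hemisphere {p ∈ S² : ⟨p, h⟩ ≥ 0} but is not contained in any open hemisphere {p ∈ S² : ⟨p, h'⟩ > 0}. Then there is exactly one unit vector h ∈ S² such that ⟨C_γ(t,θ), h⟩ ≥ 0 for all (t,θ) ∈ [0,1] × [0,ρ₀]. -/

import Mathlib

noncomputable section

open Real Set Filter
open scoped RealInnerProductSpace

abbrev E3 := EuclideanSpace ℝ (Fin 3)

/-- The cross product on `ℝ³`. -/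
def cross3 (u v : E3) : E3 :=
  (WithLp.equiv 2 (Fin 3 → ℝ)).symm
    ![u 1 * v 2 - u 2 * v 1, u 2 * v 0 - u 0 * v 2, u 0 * v 1 - u 1 * v 0]

/-- Unit tangent vector of a curve. -/
def unitTan (γ : ℝ → E3) (t : ℝ) : E3 := ‖deriv γ t‖⁻¹ • deriv γ t

/-- Unit normal vector of a spherical curve. -/
def unitNor (γ : ℝ → E3) (t : ℝ) : E3 := cross3 (γ t) (unitTan γ t)

/-- Geodesic curvature of a spherical curve. -/
def geodCurv (γ : ℝ → E3) (t : ℝ) : ℝ :=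
  ⟪deriv (unitTan γ) t, unitNor γ t⟫ / ‖deriv γ t‖

/-- Radius of curvature: `arccot` of the geodesic curvature, valued in `(0, π)`. -/
def radCurv (γ : ℝ → E3) (t : ℝ) : ℝ := π / 2 - arctan (geodCurv γ t)

/-- A closed curve on the sphere `S²`: a `C²`, 1-periodic, regular map into the unit sphere. -/
def IsClosedCurve (γ : ℝ → E3) : Prop :=
  ContDiff ℝ 2 γ ∧ Function.Periodic γ 1 ∧ ∀ t, ‖γ t‖ = 1 ∧ deriv γ t ≠ 0

/-- Homotopy of closed spherical curves through closed curves whose radius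
of curvature takes values in `(ρ₂, ρ₁)`. -/
def HomotopicIn (ρ₂ ρ₁ : ℝ) (γ₀ γ₁ : ℝ → E3) : Prop :=
  ∃ H : ℝ → ℝ → E3,
    H 0 = γ₀ ∧ H 1 = γ₁ ∧
    (∀ s ∈ Icc (0:ℝ) 1, IsClosedCurve (H s) ∧ ∀ t, radCurv (H s) t ∈ Ioo ρ₂ ρ₁) ∧
    ContinuousOn (fun p : ℝ × ℝ => H p.1 p.2) (Icc 0 1 ×ˢ univ) ∧
    ContinuousOn (fun p : ℝ × ℝ => deriv (H p.1) p.2) (Icc 0 1 ×ˢ univ) ∧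
    ContinuousOn (fun p : ℝ × ℝ => deriv (deriv (H p.1)) p.2) (Icc 0 1 ×ˢ univ)

/-- `σ` is a circle traversed `k` times with radius of curvature `α`. -/
def IsCircleTraversed (k : ℕ) (α : ℝ) (σ : ℝ → E3) : Prop :=
  α ∈ Ioo (0:ℝ) π ∧
  ∃ R : Matrix (Fin 3) (Fin 3) ℝ, R.transpose * R = 1 ∧ R.det = 1 ∧
    ∀ t, σ t = (WithLp.equiv 2 (Fin 3 → ℝ)).symm
      (R.mulVec ![sin α * cos (2 * π * k * t), sin α * sin (2 * π * k * t), cos α])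

/-- Caustic band / translation formula. -/
def caustic (γ : ℝ → E3) (t θ : ℝ) : E3 :=
  Real.cos θ • γ t + Real.sin θ • unitNor γ t



lemma inner_E3 (u v : E3) : ⟪u, v⟫ = u 0 * v 0 + u 1 * v 1 + u 2 * v 2 := by
  simp only [PiLp.inner_apply, RCLike.inner_apply, conj_trivial, Fin.sum_univ_three]
  ring

lemma cross3_applyv (u v : E3) :
    (cross3 u v 0 = u 1 * v 2 - u 2 * v 1) ∧ (cross3 u v 1 = u 2 * v 0 - u 0 * v 2) ∧
      (cross3 u v 2 = u 0 * v 1 - u 1 * v 0) := by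
  refine ⟨?_, ?_, ?_⟩ <;> simp [cross3]

lemma inner_cross3_left (u v : E3) : ⟪cross3 u v, u⟫ = 0 := by
  simp only [inner_E3, (cross3_applyv u v).1, (cross3_applyv u v).2.1, (cross3_applyv u v).2.2]
  ring

lemma inner_cross3_right (u v : E3) : ⟪cross3 u v, v⟫ = 0 := by
  simp only [inner_E3, (cross3_applyv u v).1, (cross3_applyv u v).2.1, (cross3_applyv u v).2.2]
  ring

lemma inner_cross3_self (u v : E3) :
    ⟪cross3 u v, cross3 u v⟫ = ⟪u,u⟫ * ⟪v,v⟫ - ⟪u,v⟫ ^ 2 := by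
  simp only [inner_E3, (cross3_applyv u v).1, (cross3_applyv u v).2.1, (cross3_applyv u v).2.2]
  ring

lemma eq_zero_of_ortho3 (u v w x : E3) (hu : ‖u‖ = 1) (hv : ‖v‖ = 1) (hw : ‖w‖ = 1)
    (huv : ⟪u,v⟫ = 0) (huw : ⟪u,w⟫ = 0) (hvw : ⟪v,w⟫ = 0)
    (hxu : ⟪x,u⟫ = 0) (hxv : ⟪x,v⟫ = 0) (hxw : ⟪x,w⟫ = 0) : x = 0 := by
  have huu : ⟪u,u⟫ = (1:ℝ) := by rw [real_inner_self_eq_norm_sq, hu]; norm_num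
  have hvv : ⟪v,v⟫ = (1:ℝ) := by rw [real_inner_self_eq_norm_sq, hv]; norm_num
  have hww : ⟪w,w⟫ = (1:ℝ) := by rw [real_inner_self_eq_norm_sq, hw]; norm_num
  have hon : Orthonormal ℝ ![u, v, w] := by
    rw [orthonormal_iff_ite]
    intro i j
    fin_cases i <;> fin_cases j <;>
      simp only [Matrix.cons_val_zero, Matrix.cons_val_one, Matrix.head_cons, Fin.mk_one,
        Fin.mk_zero, Fin.isValue, Matrix.cons_val_fin_one, Fin.reduceEq, if_true, if_false,
        Matrix.cons_val_succ, show ((⟨2, by norm_num⟩ : Fin 3)) = 2 from rfl,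
        Matrix.cons_val_two, Matrix.tail_cons] <;>
      first
        | exact huu | exact hvv | exact hww | exact huv | exact huw | exact hvw
        | (rw [real_inner_comm]; first | exact huv | exact huw | exact hvw)
        | simp [huu, hvv, hww, huv, huw, hvw]
  have hcard : Fintype.card (Fin 3) = Module.finrank ℝ E3 := by
    simp [finrank_euclideanSpace_fin]
  have hspan : Submodule.span ℝ (range ![u, v, w]) = ⊤ := by
    have h1 := (basisOfLinearIndependentOfCardEqFinrank hon.linearIndependent hcard).span_eq
    have h2 := coe_basisOfLinearIndependentOfCardEqFinrank hon.linearIndependent hcard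
    rwa [h2] at h1
  have hx : x ∈ Submodule.span ℝ (range ![u, v, w]) := hspan ▸ Submodule.mem_top
  rw [Submodule.mem_span_range_iff_exists_fun] at hx
  obtain ⟨c, hc⟩ := hx
  have hzz : ⟪x, x⟫ = 0 := by
    conv_lhs => rw [← hc]
    rw [sum_inner]
    refine Finset.sum_eq_zero fun i _ => ?_
    fin_cases i <;>
      simp only [Matrix.cons_val_zero, Matrix.cons_val_one, Matrix.head_cons,
        show ((⟨2, by norm_num⟩ : Fin 3)) = 2 from rfl, Matrix.cons_val_two, Matrix.tail_cons,
        Fin.mk_one, Fin.mk_zero, Fin.isValue, real_inner_smul_left] <;>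
      rw [hc] <;>
      [rw [real_inner_comm x u, hxu]; rw [real_inner_comm x v, hxv];
        rw [real_inner_comm x w, hxw]] <;> ring
  exact inner_self_eq_zero.mp hzz

lemma span3 (u v w h : E3) (hu : ‖u‖ = 1) (hv : ‖v‖ = 1) (hw : ‖w‖ = 1)
    (huv : ⟪u,v⟫ = 0) (huw : ⟪u,w⟫ = 0) (hvw : ⟪v,w⟫ = 0) :
    h = ⟪h,u⟫ • u + ⟪h,v⟫ • v + ⟪h,w⟫ • w := by
  have huu : ⟪u,u⟫ = (1:ℝ) := by rw [real_inner_self_eq_norm_sq, hu]; norm_num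
  have hvv : ⟪v,v⟫ = (1:ℝ) := by rw [real_inner_self_eq_norm_sq, hv]; norm_num
  have hww : ⟪w,w⟫ = (1:ℝ) := by rw [real_inner_self_eq_norm_sq, hw]; norm_num
  have hx := eq_zero_of_ortho3 u v w (h - (⟪h,u⟫ • u + ⟪h,v⟫ • v + ⟪h,w⟫ • w)) hu hv hw huv huw hvw
    (by rw [inner_sub_left, inner_add_left, inner_add_left, real_inner_smul_left,
          real_inner_smul_left, real_inner_smul_left, huu, real_inner_comm u v, huv,
          real_inner_comm u w, huw]; ring)
    (by rw [inner_sub_left, inner_add_left, inner_add_left, real_inner_smul_left,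
          real_inner_smul_left, real_inner_smul_left, hvv, huv, real_inner_comm v w, hvw]; ring)
    (by rw [inner_sub_left, inner_add_left, inner_add_left, real_inner_smul_left,
          real_inner_smul_left, real_inner_smul_left, hww, huw, hvw]; ring)
  exact (sub_eq_zero.mp hx)

lemma norm_sq3 (u v w h : E3) (hu : ‖u‖ = 1) (hv : ‖v‖ = 1) (hw : ‖w‖ = 1)
    (huv : ⟪u,v⟫ = 0) (huw : ⟪u,w⟫ = 0) (hvw : ⟪v,w⟫ = 0) :
    ‖h‖ ^ 2 = ⟪h,u⟫ ^ 2 + ⟪h,v⟫ ^ 2 + ⟪h,w⟫ ^ 2 := by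
  have hs := span3 u v w h hu hv hw huv huw hvw
  have : ⟪h,h⟫ = ⟪h,u⟫ ^ 2 + ⟪h,v⟫ ^ 2 + ⟪h,w⟫ ^ 2 := by
    nth_rewrite 2 [hs]
    rw [inner_add_right, inner_add_right, real_inner_smul_right, real_inner_smul_right,
      real_inner_smul_right]
    ring
  rw [← real_inner_self_eq_norm_sq, this]

lemma hasDerivAt_coord {f : ℝ → E3} {f' : E3} {x : ℝ} (hf : HasDerivAt f f' x) (i : Fin 3) :
    HasDerivAt (fun s => f s i) (f' i) x :=
  (EuclideanSpace.proj i (𝕜 := ℝ)).hasFDerivAt.comp_hasDerivAt x hf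

lemma hasDerivAt_cross3 {f g : ℝ → E3} {f' g' : E3} {x : ℝ}
    (hf : HasDerivAt f f' x) (hg : HasDerivAt g g' x) :
    HasDerivAt (fun s => cross3 (f s) (g s)) (cross3 f' (g x) + cross3 (f x) g') x := by
  have h0 := hasDerivAt_coord hf 0
  have h1 := hasDerivAt_coord hf 1
  have h2 := hasDerivAt_coord hf 2
  have k0 := hasDerivAt_coord hg 0
  have k1 := hasDerivAt_coord hg 1
  have k2 := hasDerivAt_coord hg 2
  have hF : HasDerivAt (fun s => ![f s 1 * g s 2 - f s 2 * g s 1,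
      f s 2 * g s 0 - f s 0 * g s 2, f s 0 * g s 1 - f s 1 * g s 0])
      ![f' 1 * g x 2 + f x 1 * g' 2 - (f' 2 * g x 1 + f x 2 * g' 1),
        f' 2 * g x 0 + f x 2 * g' 0 - (f' 0 * g x 2 + f x 0 * g' 2),
        f' 0 * g x 1 + f x 0 * g' 1 - (f' 1 * g x 0 + f x 1 * g' 0)] x := by
    rw [hasDerivAt_pi]
    intro i
    fin_cases i <;>
      simp only [Matrix.cons_val_zero, Matrix.cons_val_one, Matrix.head_cons,
        show ((⟨2, by norm_num⟩ : Fin 3)) = 2 from rfl, Matrix.cons_val_two, Matrix.tail_cons,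
        Fin.mk_one, Fin.mk_zero, Fin.isValue]
    · exact (h1.mul k2).sub (h2.mul k1)
    · exact (h2.mul k0).sub (h0.mul k2)
    · exact (h0.mul k1).sub (h1.mul k0)
  have hL := ((EuclideanSpace.equiv (Fin 3) ℝ).symm.toContinuousLinearMap.hasFDerivAt).comp_hasDerivAt x hF
  convert hL using 1
  · rfl
  · rfl
  · rfl
  · rfl
  · ext i
    fin_cases i <;>
      simp [cross3, EuclideanSpace.equiv, PiLp.add_apply] <;> ring

lemma deriv_inner_const {f g : ℝ → E3} {f' g' : E3} {x : ℝ} {c : ℝ}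
    (hf : HasDerivAt f f' x) (hg : HasDerivAt g g' x) (hc : ∀ s, ⟪f s, g s⟫ = c) :
    ⟪f x, g'⟫ + ⟪f', g x⟫ = 0 := by
  have h := HasDerivAt.inner ℝ hf hg
  have he : (fun s => ⟪f s, g s⟫) = fun _ => c := funext hc
  rw [he] at h
  exact ((hasDerivAt_const x c).unique h).symm

section curve
variable {γ : ℝ → E3}

lemma gamma_hasDeriv (hγ : IsClosedCurve γ) (t : ℝ) : HasDerivAt γ (deriv γ t) t :=
  ((hγ.1.differentiable (by norm_num)) t).hasDerivAt

lemma inner_gamma_self (hγ : IsClosedCurve γ) (t : ℝ) : ⟪γ t, γ t⟫ = 1 := by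
  rw [real_inner_self_eq_norm_sq, (hγ.2.2 t).1]; norm_num

lemma deriv_gamma_contDiff (hγ : IsClosedCurve γ) : ContDiff ℝ 1 (deriv γ) := by
  have h2 : ContDiff ℝ ((1 : ℕ) + 1) γ := by exact_mod_cast hγ.1
  exact (contDiff_succ_iff_deriv.mp h2).2.2

lemma unitTan_hasDeriv (hγ : IsClosedCurve γ) (t : ℝ) :
    HasDerivAt (unitTan γ) (deriv (unitTan γ) t) t := by
  have hd : DifferentiableAt ℝ (unitTan γ) t := by
    have h1 : DifferentiableAt ℝ (deriv γ) t :=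
      (deriv_gamma_contDiff hγ).differentiable one_ne_zero t
    have h2 : DifferentiableAt ℝ (fun s => ‖deriv γ s‖) t :=
      DifferentiableAt.norm ℝ h1 (hγ.2.2 t).2
    have h3 : DifferentiableAt ℝ (fun s => ‖deriv γ s‖⁻¹) t :=
      h2.inv (norm_ne_zero_iff.mpr (hγ.2.2 t).2)
    exact h3.smul h1
  exact hd.hasDerivAt

lemma norm_unitTan (hγ : IsClosedCurve γ) (t : ℝ) : ‖unitTan γ t‖ = 1 := by
  rw [unitTan, norm_smul, norm_inv, norm_norm,
    inv_mul_cancel₀ (norm_ne_zero_iff.mpr (hγ.2.2 t).2)]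

lemma deriv_eq_norm_smul_unitTan (hγ : IsClosedCurve γ) (t : ℝ) :
    deriv γ t = ‖deriv γ t‖ • unitTan γ t := by
  rw [unitTan, smul_smul, mul_inv_cancel₀ (norm_ne_zero_iff.mpr (hγ.2.2 t).2), one_smul]

lemma inner_gamma_deriv (hγ : IsClosedCurve γ) (t : ℝ) : ⟪γ t, deriv γ t⟫ = 0 := by
  have h := deriv_inner_const (gamma_hasDeriv hγ t) (gamma_hasDeriv hγ t) (inner_gamma_self hγ)
  have := real_inner_comm (γ t) (deriv γ t)
  linarith [h, real_inner_comm (deriv γ t) (γ t)]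

lemma inner_gamma_unitTan (hγ : IsClosedCurve γ) (t : ℝ) : ⟪γ t, unitTan γ t⟫ = 0 := by
  rw [unitTan, real_inner_smul_right, inner_gamma_deriv hγ, mul_zero]

lemma inner_gamma_unitNor (hγ : IsClosedCurve γ) (t : ℝ) : ⟪γ t, unitNor γ t⟫ = 0 := by
  rw [real_inner_comm, unitNor]; exact inner_cross3_left _ _

lemma inner_unitTan_unitNor (hγ : IsClosedCurve γ) (t : ℝ) :
    ⟪unitTan γ t, unitNor γ t⟫ = 0 := by
  rw [real_inner_comm, unitNor]; exact inner_cross3_right _ _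

lemma norm_unitNor (hγ : IsClosedCurve γ) (t : ℝ) : ‖unitNor γ t‖ = 1 := by
  have h := inner_cross3_self (γ t) (unitTan γ t)
  have hTT : ⟪unitTan γ t, unitTan γ t⟫ = (1:ℝ) := by
    rw [real_inner_self_eq_norm_sq, norm_unitTan hγ]; norm_num
  rw [inner_gamma_self hγ, inner_gamma_unitTan hγ, hTT] at h
  have h2 : ⟪unitNor γ t, unitNor γ t⟫ = 1 := by rw [unitNor, h]; norm_num
  have h3 := real_inner_self_eq_norm_sq (unitNor γ t)
  nlinarith [norm_nonneg (unitNor γ t)]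

lemma unitNor_hasDeriv (hγ : IsClosedCurve γ) (t : ℝ) :
    HasDerivAt (unitNor γ) (deriv (unitNor γ) t) t := by
  have h := hasDerivAt_cross3 (gamma_hasDeriv hγ t) (unitTan_hasDeriv hγ t)
  exact (HasDerivAt.differentiableAt (by exact h : HasDerivAt (unitNor γ) _ t)).hasDerivAt

lemma inner_unitNor_self (hγ : IsClosedCurve γ) (t : ℝ) : ⟪unitNor γ t, unitNor γ t⟫ = 1 := by
  rw [real_inner_self_eq_norm_sq, norm_unitNor hγ]; norm_num

lemma deriv_unitNor_eq (hγ : IsClosedCurve γ) (t : ℝ) :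
    deriv (unitNor γ) t = -(geodCurv γ t * ‖deriv γ t‖) • unitTan γ t := by
  have hNne : ‖deriv γ t‖ ≠ 0 := norm_ne_zero_iff.mpr (hγ.2.2 t).2
  have hnd := unitNor_hasDeriv hγ t
  have hnn : ⟪deriv (unitNor γ) t, unitNor γ t⟫ = 0 := by
    have h := deriv_inner_const hnd hnd (inner_unitNor_self hγ)
    have := real_inner_comm (unitNor γ t) (deriv (unitNor γ) t)
    linarith
  have hng : ⟪deriv (unitNor γ) t, γ t⟫ = 0 := by
    have h := deriv_inner_const hnd (gamma_hasDeriv hγ t)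
      (fun s => by rw [real_inner_comm]; exact inner_gamma_unitNor hγ s)
    have h2 : ⟪unitNor γ t, deriv γ t⟫ = 0 := by
      rw [deriv_eq_norm_smul_unitTan hγ t, real_inner_smul_right,
        real_inner_comm (unitTan γ t) (unitNor γ t), inner_unitTan_unitNor hγ t, mul_zero]
    rw [h2, zero_add] at h
    exact h
  have hnT : ⟪deriv (unitNor γ) t, unitTan γ t⟫ = -(geodCurv γ t * ‖deriv γ t‖) := by
    have h := deriv_inner_const hnd (unitTan_hasDeriv hγ t)
      (fun s => by rw [real_inner_comm]; exact inner_unitTan_unitNor hγ s)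
    have hκ : ⟪unitNor γ t, deriv (unitTan γ) t⟫ = geodCurv γ t * ‖deriv γ t‖ := by
      rw [real_inner_comm]
      rw [geodCurv, div_mul_cancel₀]
      exact hNne
    rw [hκ] at h
    linarith
  have hexp := span3 (γ t) (unitTan γ t) (unitNor γ t) (deriv (unitNor γ) t)
    (hγ.2.2 t).1 (norm_unitTan hγ t) (norm_unitNor hγ t)
    (inner_gamma_unitTan hγ t) (inner_gamma_unitNor hγ t) (inner_unitTan_unitNor hγ t)
  rw [hng, hnT, hnn] at hexp
  rw [hexp]
  simp

lemma inner_caustic (γ : ℝ → E3) (s θ' : ℝ) (h : E3) :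
    ⟪caustic γ s θ', h⟫ = Real.cos θ' * ⟪γ s, h⟫ + Real.sin θ' * ⟪unitNor γ s, h⟫ := by
  rw [caustic, inner_add_left, real_inner_smul_left, real_inner_smul_left]

lemma caustic_inner_hasDeriv (hγ : IsClosedCurve γ) (θ : ℝ) (h : E3) (t : ℝ) :
    HasDerivAt (fun s => ⟪caustic γ s θ, h⟫)
      ((Real.cos θ - Real.sin θ * geodCurv γ t) * ‖deriv γ t‖ * ⟪unitTan γ t, h⟫) t := by
  have hγd := gamma_hasDeriv hγ t
  have hnd := unitNor_hasDeriv hγ t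
  have h1 : HasDerivAt (fun s => Real.cos θ * ⟪γ s, h⟫ + Real.sin θ * ⟪unitNor γ s, h⟫)
      (Real.cos θ * (⟪γ t, (0:E3)⟫ + ⟪deriv γ t, h⟫) +
        Real.sin θ * (⟪unitNor γ t, (0:E3)⟫ + ⟪deriv (unitNor γ) t, h⟫)) t :=
    ((HasDerivAt.inner ℝ hγd (hasDerivAt_const t h)).const_mul _).add
      ((HasDerivAt.inner ℝ hnd (hasDerivAt_const t h)).const_mul _)
  simp only [inner_zero_right, zero_add] at h1
  have heq : (fun s => ⟪caustic γ s θ, h⟫) =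
      fun s => Real.cos θ * ⟪γ s, h⟫ + Real.sin θ * ⟪unitNor γ s, h⟫ :=
    funext fun s => inner_caustic γ s θ h
  rw [heq]
  have e1 : ⟪deriv γ t, h⟫ = ‖deriv γ t‖ * ⟪unitTan γ t, h⟫ := by
    conv_lhs => rw [deriv_eq_norm_smul_unitTan hγ t]
    rw [real_inner_smul_left]
  have e2 : ⟪deriv (unitNor γ) t, h⟫ = -(geodCurv γ t * ‖deriv γ t‖) * ⟪unitTan γ t, h⟫ := by
    rw [deriv_unitNor_eq hγ t, real_inner_smul_left]
  convert h1 using 1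
  rw [e1, e2]
  ring

lemma deriv_zero_of_min {F : ℝ → ℝ} {d t : ℝ} (hpos : ∀ s, 0 ≤ F s) (hz : F t = 0)
    (hd : HasDerivAt F d t) : d = 0 := by
  have hmin : IsLocalMin F t := Filter.Eventually.of_forall fun s => hz ▸ hpos s
  exact hmin.hasDerivAt_eq_zero hd

lemma curv_bound {ρ₀ : ℝ} (hρ₀ : ρ₀ ∈ Ioc 0 (π / 2)) {t : ℝ} (h : radCurv γ t ∈ Ioo 0 ρ₀) :
    Real.cos ρ₀ < Real.sin ρ₀ * geodCurv γ t := by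
  have h1 : π / 2 - ρ₀ < Real.arctan (geodCurv γ t) := by
    have := h.2; rw [radCurv] at this; linarith
  have h0 : 0 ≤ π / 2 - ρ₀ := by linarith [hρ₀.2]
  have h2 : Real.tan (π / 2 - ρ₀) < Real.tan (Real.arctan (geodCurv γ t)) :=
    Real.tan_lt_tan_of_nonneg_of_lt_pi_div_two h0 (Real.arctan_lt_pi_div_two _) h1
  rw [Real.tan_arctan] at h2
  have h3 : Real.tan (π / 2 - ρ₀) = Real.cos ρ₀ / Real.sin ρ₀ := by
    rw [Real.tan_eq_sin_div_cos, Real.sin_pi_div_two_sub, Real.cos_pi_div_two_sub]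
  have hs : 0 < Real.sin ρ₀ :=
    Real.sin_pos_of_pos_of_lt_pi hρ₀.1 (by linarith [Real.pi_pos])
  rw [h3, div_lt_iff₀ hs] at h2
  linarith

lemma inner_unitTan_eq_zero (hγ : IsClosedCurve γ) {ρ₀ : ℝ} {h : E3}
    (hpos : ∀ s, ∀ θ' ∈ Icc (0:ℝ) ρ₀, 0 ≤ ⟪caustic γ s θ', h⟫) {t θc : ℝ}
    (hmem : θc ∈ Icc (0:ℝ) ρ₀) (hz : ⟪caustic γ t θc, h⟫ = 0)
    (hfac : Real.cos θc - Real.sin θc * geodCurv γ t ≠ 0) : ⟪unitTan γ t, h⟫ = 0 := by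
  have hd := caustic_inner_hasDeriv hγ θc h t
  have h0 := deriv_zero_of_min (fun s => hpos s θc hmem) hz hd
  have hN : ‖deriv γ t‖ ≠ 0 := norm_ne_zero_iff.mpr (hγ.2.2 t).2
  rcases mul_eq_zero.mp h0 with h1 | h1
  · exact absurd h1 (mul_ne_zero hfac hN)
  · exact h1

lemma hemisphere_touch {ρ₀ : ℝ} (hρ₀ : ρ₀ ∈ Ioc 0 (π / 2)) (hγ : IsClosedCurve γ)
    (hrad : ∀ t, radCurv γ t ∈ Ioo 0 ρ₀) {h : E3} (hh : ‖h‖ = 1)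
    (hpos : ∀ s, ∀ θ' ∈ Icc (0:ℝ) ρ₀, 0 ≤ ⟪caustic γ s θ', h⟫) {t θ : ℝ}
    (hθ : θ ∈ Icc (0:ℝ) ρ₀) (hz : ⟪caustic γ t θ, h⟫ = 0) :
    h = (if θ = 0 then unitNor γ t
          else Real.sin ρ₀ • γ t - Real.cos ρ₀ • unitNor γ t) := by
  have hs : 0 < Real.sin ρ₀ :=
    Real.sin_pos_of_pos_of_lt_pi hρ₀.1 (by linarith [Real.pi_pos, hρ₀.2])
  set a := ⟪γ t, h⟫ with ha_def
  set b := ⟪unitNor γ t, h⟫ with hb_def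
  set c := ⟪unitTan γ t, h⟫ with hc_def
  have h0mem : (0:ℝ) ∈ Icc (0:ℝ) ρ₀ := ⟨le_refl 0, le_of_lt hρ₀.1⟩
  have hρmem : ρ₀ ∈ Icc (0:ℝ) ρ₀ := ⟨le_of_lt hρ₀.1, le_refl ρ₀⟩
  have hf : ∀ θ' ∈ Icc (0:ℝ) ρ₀, 0 ≤ Real.cos θ' * a + Real.sin θ' * b := fun θ' hm => by
    rw [← inner_caustic]; exact hpos t θ' hm
  have hzf : Real.cos θ * a + Real.sin θ * b = 0 := by rw [← inner_caustic]; exact hz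
  have hspan : h = a • γ t + c • unitTan γ t + b • unitNor γ t := by
    have hsp := span3 (γ t) (unitTan γ t) (unitNor γ t) h (hγ.2.2 t).1 (norm_unitTan hγ t)
      (norm_unitNor hγ t) (inner_gamma_unitTan hγ t) (inner_gamma_unitNor hγ t)
      (inner_unitTan_unitNor hγ t)
    rwa [real_inner_comm (γ t) h, real_inner_comm (unitTan γ t) h,
      real_inner_comm (unitNor γ t) h] at hsp
  have hnormsq : a ^ 2 + c ^ 2 + b ^ 2 = 1 := by
    have hns := norm_sq3 (γ t) (unitTan γ t) (unitNor γ t) h (hγ.2.2 t).1 (norm_unitTan hγ t)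
      (norm_unitNor hγ t) (inner_gamma_unitTan hγ t) (inner_gamma_unitNor hγ t)
      (inner_unitTan_unitNor hγ t)
    rw [real_inner_comm (γ t) h, real_inner_comm (unitTan γ t) h,
      real_inner_comm (unitNor γ t) h, hh] at hns
    rw [← hns]; norm_num
  have pyth := Real.sin_sq_add_cos_sq ρ₀
  by_cases hθ0 : θ = 0
  · -- θ = 0
    subst hθ0
    have ha : a = 0 := by
      have := hzf; simp only [Real.cos_zero, Real.sin_zero] at this; linarith
    have hc : c = 0 := by
      refine inner_unitTan_eq_zero hγ hpos h0mem ?_ ?_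
      · rw [inner_caustic]; simp only [Real.cos_zero, Real.sin_zero, ← ha_def, ← hb_def]
        rw [ha]; ring
      · simp
    have hb0 : 0 ≤ b := by
      have := hf ρ₀ hρmem; rw [ha] at this; nlinarith
    have hb1 : b = 1 := by nlinarith
    rw [if_pos rfl, hspan, ha, hc, hb1]
    module
  · have hθρ : θ = ρ₀ ∨ θ ∈ Ioo (0:ℝ) ρ₀ := by
      rcases eq_or_lt_of_le hθ.2 with h1 | h1
      · exact Or.inl h1
      · exact Or.inr ⟨lt_of_le_of_ne hθ.1 (Ne.symm hθ0), h1⟩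
    rcases hθρ with heq | hint
    · -- θ = ρ₀
      rw [heq] at hz hzf
      have hc : c = 0 := by
        refine inner_unitTan_eq_zero hγ hpos hρmem hz ?_
        have := curv_bound hρ₀ (hrad t)
        intro hcon; nlinarith
      have ha0 : 0 ≤ a := by have := hf 0 h0mem; simpa using this
      have hab : a ^ 2 + b ^ 2 = 1 := by nlinarith
      have hb2' : (Real.sin ρ₀ * b) ^ 2 = (Real.cos ρ₀ * a) ^ 2 := by
        have e1' : Real.sin ρ₀ * b = -(Real.cos ρ₀ * a) := by linarith
        rw [e1']; ring
      have h2 : a ^ 2 = Real.sin ρ₀ ^ 2 := by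
        linear_combination (Real.sin ρ₀) ^ 2 * hab - hb2' - a ^ 2 * pyth
      have ha : a = Real.sin ρ₀ := by
        nlinarith [sq_nonneg (a - Real.sin ρ₀), sq_nonneg (a + Real.sin ρ₀)]
      have hb : b = -Real.cos ρ₀ := by
        have hbb : Real.sin ρ₀ * b = Real.sin ρ₀ * (-Real.cos ρ₀) := by
          linear_combination hzf - Real.cos ρ₀ * ha
        exact mul_left_cancel₀ (ne_of_gt hs) hbb
      rw [if_neg hθ0, hspan, ha, hb, hc]
      module
    · -- interior : contradiction
      exfalso
      have hder : HasDerivAt (fun x => Real.cos x * a + Real.sin x * b)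
          (-Real.sin θ * a + Real.cos θ * b) θ :=
        ((Real.hasDerivAt_cos θ).mul_const a).add ((Real.hasDerivAt_sin θ).mul_const b)
      have hmin : IsLocalMin (fun x => Real.cos x * a + Real.sin x * b) θ := by
        refine Filter.eventually_of_mem (Ioo_mem_nhds hint.1 hint.2) fun x hx => ?_
        simp only
        rw [hzf]
        exact hf x (Ioo_subset_Icc_self hx)
      have e2 := hmin.hasDerivAt_eq_zero hder
      have pythθ := Real.sin_sq_add_cos_sq θ
      have ha : a = 0 := by
        linear_combination Real.cos θ * hzf - Real.sin θ * e2 - a * pythθ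
      have hb : b = 0 := by
        linear_combination Real.sin θ * hzf + Real.cos θ * e2 - b * pythθ
      have hc : c = 0 := by
        refine inner_unitTan_eq_zero hγ hpos h0mem ?_ ?_
        · rw [inner_caustic]; simp only [Real.cos_zero, Real.sin_zero, ← ha_def, ← hb_def]
          rw [ha]; ring
        · simp
      nlinarith

end curve

/-- For an equatorial curve (caustic band contained in some closed
hemisphere, but in no open hemisphere), the closed hemisphere containing the caustic band
is unique. -/
theorem equatorial_hemisphere_unique (ρ₀ : ℝ) (hρ₀ : ρ₀ ∈ Ioc 0 (π / 2))
    (γ : ℝ → E3) (hγ : IsClosedCurve γ) (hrad : ∀ t, radCurv γ t ∈ Ioo 0 ρ₀)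
    (hcond : ∃ h : E3, ‖h‖ = 1 ∧ ∀ t, ∀ θ ∈ Icc (0:ℝ) ρ₀, 0 ≤ ⟪caustic γ t θ, h⟫)
    (hnotopen : ¬ ∃ h : E3, ‖h‖ = 1 ∧ ∀ t, ∀ θ ∈ Icc (0:ℝ) ρ₀, 0 < ⟪caustic γ t θ, h⟫) :
    ∃! h : E3, ‖h‖ = 1 ∧ ∀ t, ∀ θ ∈ Icc (0:ℝ) ρ₀, 0 ≤ ⟪caustic γ t θ, h⟫ := by
  obtain ⟨h0, hh0, hpos0⟩ := hcond
  have key : ∀ h₁ h₂ : E3, (‖h₁‖ = 1 ∧ ∀ t, ∀ θ ∈ Icc (0:ℝ) ρ₀, 0 ≤ ⟪caustic γ t θ, h₁⟫) →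
      (‖h₂‖ = 1 ∧ ∀ t, ∀ θ ∈ Icc (0:ℝ) ρ₀, 0 ≤ ⟪caustic γ t θ, h₂⟫) → h₁ = h₂ := by
    rintro h₁ h₂ ⟨hn₁, hp₁⟩ ⟨hn₂, hp₂⟩
    by_cases hzero : ∃ t θ, θ ∈ Icc (0:ℝ) ρ₀ ∧
        ⟪caustic γ t θ, h₁⟫ = 0 ∧ ⟪caustic γ t θ, h₂⟫ = 0
    · obtain ⟨t, θ, hθ, hz₁, hz₂⟩ := hzero
      rw [hemisphere_touch hρ₀ hγ hrad hn₁ hp₁ hθ hz₁,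
        hemisphere_touch hρ₀ hγ hrad hn₂ hp₂ hθ hz₂]
    · exfalso
      push_neg at hzero
      have hsum : ∀ t, ∀ θ ∈ Icc (0:ℝ) ρ₀, 0 < ⟪caustic γ t θ, h₁ + h₂⟫ := by
        intro t θ hθ
        rw [inner_add_right]
        rcases lt_or_eq_of_le (hp₁ t θ hθ) with h | h
        · linarith [hp₂ t θ hθ]
        · rcases lt_or_eq_of_le (hp₂ t θ hθ) with h' | h'
          · linarith
          · exact absurd h'.symm (hzero t θ hθ h.symm)
      have hne : h₁ + h₂ ≠ 0 := by
        intro hcon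
        have := hsum 0 0 ⟨le_refl 0, le_of_lt hρ₀.1⟩
        rw [hcon, inner_zero_right] at this
        exact lt_irrefl 0 this
      refine hnotopen ⟨‖h₁ + h₂‖⁻¹ • (h₁ + h₂), ?_, ?_⟩
      · rw [norm_smul, norm_inv, norm_norm, inv_mul_cancel₀ (norm_ne_zero_iff.mpr hne)]
      · intro t θ hθ
        rw [real_inner_smul_right]
        exact mul_pos (inv_pos.mpr (norm_pos_iff.mpr hne)) (hsum t θ hθ)
  exact ⟨h0, ⟨hh0, hpos0⟩, fun y hy => key y h0 hy ⟨hh0, hpos0⟩⟩
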